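/- Let G = ((V,E),(V_1,V_2), v_in, AP, L) be a labeled game graph that is controllably recurrent. Then there exists an end component U of G with v_in ∈ U and a player-1 strategy π_1 such that for every player-2 strategy π_2, |L(ω(v_in,π_1,π_2))| ≥ |⋃_{u∈U} L(u)|. -/

import Mathlib

/-- `π` is a valid strategy for the player owning the vertices satisfying `owns`:
for every history `w` and current vertex `v` owned by the player, the chosen
successor `π w v` is along an edge of the game graph. -/
def IsStrat {V : Type*} (E : V → V → Prop) (owns : V → Prop)
    (π : List V → V → V) : Prop :=
  ∀ (w : List V) (v : V), owns v → E v (π w v)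

/-- Auxiliary function computing, after `i` steps of the play from `v`, the pair
(current vertex, history of previously visited vertices).  Here `P1 v = true` means
`v` is a player-1 vertex, and `P1 v = false` that it is a player-2 vertex. -/
def playSeq {V : Type*} (P1 : V → Bool) (π1 π2 : List V → V → V) (v : V) :
    ℕ → V × List V
  | 0 => (v, [])
  | i + 1 =>
    let p := playSeq P1 π1 π2 v i
    (if P1 p.1 then π1 p.2 p.1 else π2 p.2 p.1, p.2 ++ [p.1])

/-- The unique play `ω(v, π1, π2)`: the `i`-th vertex of the infinite play starting
at `v` in which player 1 (resp. player 2) resolves choices at vertices `u` with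
`P1 u = true` (resp. `P1 u = false`) using strategy `π1` (resp. `π2`). -/
def play {V : Type*} (P1 : V → Bool) (π1 π2 : List V → V → V) (v : V) (i : ℕ) : V :=
  (playSeq P1 π1 π2 v i).1

/-- An end component of a labeled game graph: a nonempty set `U` of vertices that is
(i) strongly connected — between any two vertices of `U` there is a path of positive
length using only vertices of `U` — and (ii) player-1 closed — every edge leaving a
player-1 vertex of `U` stays in `U`. -/
def IsEndComponent {V : Type*} (E : V → V → Prop) (P1 : V → Bool) (U : Set V) :
    Prop :=
  U.Nonempty ∧
    (∀ u ∈ U, ∀ u' ∈ U,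
      Relation.TransGen (fun a b => a ∈ U ∧ b ∈ U ∧ E a b) u u') ∧
    (∀ u ∈ U, P1 u = true → ∀ u', E u u' → u' ∈ U)


open Classical

section Aux

variable {V : Type*}

/-- list of successors -/
noncomputable def sl [Fintype V] (E : V → V → Prop) (v : V) : List V :=
  (Finset.univ.filter (fun u => E v u)).toList

lemma mem_sl [Fintype V] (E : V → V → Prop) (v u : V) : u ∈ sl E v ↔ E v u := by
  simp [sl]

lemma sl_pos [Fintype V] (E : V → V → Prop) (hE : ∀ v, ∃ u, E v u) (v : V) :
    0 < (sl E v).length := by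
  obtain ⟨u, hu⟩ := hE v
  exact List.length_pos_iff.mpr (List.ne_nil_of_mem ((mem_sl E v u).2 hu))

/-- occurrence count -/
noncomputable def cnt (v : V) : List V → ℕ
  | [] => 0
  | u :: w => (if u = v then 1 else 0) + cnt v w

lemma cnt_append (v : V) (w w' : List V) : cnt v (w ++ w') = cnt v w + cnt v w' := by
  induction w with
  | nil => simp [cnt]
  | cons x w ih => simp [cnt, ih, Nat.add_assoc]

end Aux
section Aux2

variable {V : Type*}

/-- rotation strategy -/
noncomputable def rot [Fintype V] (E : V → V → Prop) (hE : ∀ v, ∃ u, E v u) :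
    List V → V → V :=
  fun w v => (sl E v).get ⟨cnt v w % (sl E v).length, Nat.mod_lt _ (sl_pos E hE v)⟩

lemma rot_isStrat [Fintype V] (E : V → V → Prop) (hE : ∀ v, ∃ u, E v u)
    (owns : V → Prop) : IsStrat E owns (rot E hE) := by
  intro w v _
  exact (mem_sl E v _).1 (List.get_mem _ _)

lemma playSeq_snd {P1 : V → Bool} (π1 π2 : List V → V → V) (v : V) (i : ℕ) :
    (playSeq P1 π1 π2 v i).2 = (List.range i).map (play P1 π1 π2 v) := by
  induction i with
  | zero => simp [playSeq]
  | succ i ih => simp [playSeq, ih, List.range_succ, play]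

lemma play_succ {P1 : V → Bool} (π1 π2 : List V → V → V) (v : V) (i : ℕ) :
    play P1 π1 π2 v (i + 1) =
      (if P1 (play P1 π1 π2 v i) then
        π1 ((List.range i).map (play P1 π1 π2 v)) (play P1 π1 π2 v i)
      else π2 ((List.range i).map (play P1 π1 π2 v)) (play P1 π1 π2 v i)) := by
  have h := playSeq_snd (P1 := P1) π1 π2 v i
  simp only [play, playSeq, ← h]

lemma play_edge {E : V → V → Prop} {P1 : V → Bool} {π1 π2 : List V → V → V}
    (h1 : IsStrat E (fun u => P1 u = true) π1)
    (h2 : IsStrat E (fun u => P1 u = false) π2) (v : V) (i : ℕ) :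
    E (play P1 π1 π2 v i) (play P1 π1 π2 v (i + 1)) := by
  rw [play_succ]
  by_cases h : P1 (play P1 π1 π2 v i) = true
  · rw [if_pos h]; exact h1 _ _ h
  · rw [if_neg h]; exact h2 _ _ (by simpa using h)

lemma play_reach {E : V → V → Prop} {P1 : V → Bool} {π1 π2 : List V → V → V}
    (h1 : IsStrat E (fun u => P1 u = true) π1)
    (h2 : IsStrat E (fun u => P1 u = false) π2) (v : V) (i : ℕ) :
    Relation.ReflTransGen E v (play P1 π1 π2 v i) := by
  induction i with
  | zero => exact Relation.ReflTransGen.refl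
  | succ i ih => exact ih.tail (play_edge h1 h2 v i)

lemma cnt_range (ρ : ℕ → V) (u : V) (i : ℕ) :
    cnt u ((List.range i).map ρ) = Nat.count (fun j => ρ j = u) i := by
  induction i with
  | zero => simp [cnt]
  | succ i ih =>
    rw [List.range_succ, List.map_append, cnt_append, ih, Nat.count_succ]
    by_cases h : ρ i = u <;> simp [h, cnt]

end Aux2

section Aux3

variable {V : Type*}

/-- player-1 attractor levels for target `vin` -/
def attr (E : V → V → Prop) (P1 : V → Bool) (vin : V) : ℕ → Set V
  | 0 => {vin}
  | k + 1 => attr E P1 vin k ∪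
      {u | (P1 u = true ∧ ∃ u', E u u' ∧ u' ∈ attr E P1 vin k) ∨
           (P1 u = false ∧ ∀ u', E u u' → u' ∈ attr E P1 vin k)}

lemma attr_mono {E : V → V → Prop} {P1 : V → Bool} {vin : V} {k m : ℕ} (h : k ≤ m) :
    attr E P1 vin k ⊆ attr E P1 vin m := by
  induction m with
  | zero => simpa [Nat.le_zero.mp h]
  | succ m ih =>
    rcases Nat.le_succ_iff.mp h with h' | h'
    · exact (ih h').trans (by intro x hx; exact Or.inl hx)
    · simp [h']

/-- every vertex reachable from `vin` is in the attractor of `vin` -/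
lemma reach_attr [Fintype V] (E : V → V → Prop) (hE : ∀ v, ∃ u, E v u)
    (P1 : V → Bool) (vin : V)
    (hcr : ∀ v, Relation.ReflTransGen E vin v →
      ∃ π1, IsStrat E (fun u => P1 u = true) π1 ∧
        ∀ π2, IsStrat E (fun u => P1 u = false) π2 →
          ∃ i : ℕ, play P1 π1 π2 v i = vin) :
    ∀ v, Relation.ReflTransGen E vin v → ∃ k, v ∈ attr E P1 vin k := by
  classical
  set A : Set V := {u | ∃ k, u ∈ attr E P1 vin k} with hA
  -- A is "closed at level K" for a uniform K
  obtain ⟨K, hK⟩ : ∃ K, ∀ u ∈ A, u ∈ attr E P1 vin K := by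
    set r : V → ℕ := fun u => if h : ∃ k, u ∈ attr E P1 vin k then Nat.find h else 0
    refine ⟨Finset.univ.sup r, fun u hu => ?_⟩
    have h1 : u ∈ attr E P1 vin (r u) := by
      have hu' : ∃ k, u ∈ attr E P1 vin k := hu
      simp only [r, dif_pos hu']
      exact Nat.find_spec hu'
    exact attr_mono (Finset.le_sup (Finset.mem_univ u)) h1
  -- key closure facts for the complement of A
  have hP1 : ∀ u ∉ A, P1 u = true → ∀ u', E u u' → u' ∉ A := by
    intro u hu hp u' he hu'
    exact hu ⟨K + 1, Or.inr (Or.inl ⟨hp, u', he, hK u' hu'⟩)⟩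
  have hP2 : ∀ u ∉ A, P1 u = false → ∃ u', E u u' ∧ u' ∉ A := by
    intro u hu hp
    by_contra h
    push_neg at h
    exact hu ⟨K + 1, Or.inr (Or.inr ⟨hp, fun u' he => hK u' (h u' he)⟩)⟩
  intro v hv
  by_contra hvA
  have hvA' : v ∉ A := fun ⟨k, hk⟩ => hvA ⟨k, hk⟩
  -- the trapping strategy for player 2
  set π2 : List V → V → V := fun _ u =>
    if h : ∃ u', E u u' ∧ u' ∉ A then h.choose else (hE u).choose with hπ2
  have hπ2S : IsStrat E (fun u => P1 u = false) π2 := by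
    intro w u _
    simp only [π2]
    split
    · next h => exact h.choose_spec.1
    · exact (hE u).choose_spec
  obtain ⟨π1, hπ1, hwin⟩ := hcr v hv
  obtain ⟨i, hi⟩ := hwin π2 hπ2S
  have hstay : ∀ j, play P1 π1 π2 v j ∉ A := by
    intro j
    induction j with
    | zero => exact hvA'
    | succ j ih =>
      rw [play_succ]
      by_cases hp : P1 (play P1 π1 π2 v j) = true
      · rw [if_pos hp]
        exact hP1 _ ih hp _ (hπ1 _ _ hp)
      · rw [if_neg hp]
        have hp' : P1 (play P1 π1 π2 v j) = false := by simpa using hp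
        obtain ⟨u', he', hu'⟩ := hP2 _ ih hp'
        have hex : ∃ w', E (play P1 π1 π2 v j) w' ∧ w' ∉ A := ⟨u', he', hu'⟩
        simp only [π2, dif_pos hex]
        exact hex.choose_spec.2
  exact hstay i (by rw [hi]; exact ⟨0, rfl⟩)

/-- the set of vertices visited infinitely often -/
def VisInf (ρ : ℕ → V) : Set V := {u | {i | ρ i = u}.Infinite}

lemma infSet_nonempty [Fintype V] (ρ : ℕ → V) : (VisInf ρ).Nonempty := by
  obtain ⟨u, hu⟩ := Finite.exists_infinite_fiber ρ
  exact ⟨u, Set.infinite_coe_iff.mp hu⟩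

lemma infSet_exists_ge {ρ : ℕ → V} {u : V} (hu : u ∈ VisInf ρ) (N : ℕ) :
    ∃ i, N ≤ i ∧ ρ i = u := by
  obtain ⟨i, hi, hNi⟩ := hu.exists_gt N
  exact ⟨i, hNi.le, hi⟩

lemma eventually_infSet [Fintype V] (ρ : ℕ → V) :
    ∃ N, ∀ i, N ≤ i → ρ i ∈ VisInf ρ := by
  have hT : {i | ρ i ∉ VisInf ρ}.Finite := by
    have : {i | ρ i ∉ VisInf ρ} ⊆ ⋃ u ∈ {u | u ∉ VisInf ρ}, {i | ρ i = u} := by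
      intro i hi
      exact Set.mem_biUnion hi rfl
    refine Set.Finite.subset (Set.Finite.biUnion (Set.toFinite _) fun u hu => ?_) this
    exact Set.not_infinite.mp hu
  obtain ⟨N, hN⟩ := hT.bddAbove
  refine ⟨N + 1, fun i hi => ?_⟩
  by_contra h
  exact absurd (hN h) (by omega)

/-- pigeonhole on successors in the play: an infinitely visited vertex has an
infinitely visited successor along the play -/
lemma infSet_succ {E : V → V → Prop} [Fintype V] {ρ : ℕ → V}
    (hedge : ∀ i, E (ρ i) (ρ (i + 1))) {u : V} (hu : u ∈ VisInf ρ) :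
    ∃ u', u' ∈ VisInf ρ ∧ E u u' := by
  haveI : Infinite ↥{i | ρ i = u} := Set.infinite_coe_iff.mpr hu
  obtain ⟨u', hu'⟩ := Finite.exists_infinite_fiber
    (fun i : ↥{i | ρ i = u} => ρ (i.1 + 1))
  rw [Set.infinite_coe_iff] at hu'
  have hne : ((fun i : ↥{i | ρ i = u} => ρ (i.1 + 1)) ⁻¹' {u'}).Nonempty :=
    hu'.nonempty
  obtain ⟨⟨i0, hi0⟩, hi0'⟩ := hne
  refine ⟨u', ?_, ?_⟩
  · have himg : (fun j : ↥{i | ρ i = u} => j.1 + 1) ''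
        ((fun i : ↥{i | ρ i = u} => ρ (i.1 + 1)) ⁻¹' {u'}) ⊆ {i | ρ i = u'} := by
      rintro j ⟨⟨i, hi⟩, hmem, rfl⟩
      exact hmem
    refine Set.Infinite.mono himg (Set.Infinite.image ?_ hu')
    intro a _ b _ hab
    exact Subtype.ext (by simpa using hab)
  · have : ρ (i0 + 1) = u' := hi0'
    have := hedge i0
    rwa [hi0, ‹ρ (i0 + 1) = u'›] at this

end Aux3

section Aux4

variable {V : Type*} [Fintype V]

/-- under the rotation strategy, the infinitely visited set is closed under
player-1 edges -/
lemma visInf_p1_closed (E : V → V → Prop) (hE : ∀ v, ∃ u, E v u)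
    (P1 : V → Bool) (π2 : List V → V → V) (vin : V)
    {u : V} (hu : u ∈ VisInf (play P1 (rot E hE) π2 vin))
    (hp : P1 u = true) {u' : V} (he : E u u') :
    u' ∈ VisInf (play P1 (rot E hE) π2 vin) := by
  classical
  set p : ℕ → Prop := fun i => play P1 (rot E hE) π2 vin i = u with hpdef
  have hinf : {i | p i}.Infinite := hu
  have hlen : 0 < (sl E u).length := sl_pos E hE u
  obtain ⟨⟨t, ht⟩, hget⟩ := List.mem_iff_get.mp ((mem_sl E u u').mpr he)
  have hget' : ∀ (n : ℕ) (h : n % (sl E u).length < (sl E u).length),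
      n % (sl E u).length = t → (sl E u).get ⟨n % (sl E u).length, h⟩ = u' := by
    intro n h hn
    have : (⟨n % (sl E u).length, h⟩ : Fin (sl E u).length) = ⟨t, ht⟩ := Fin.ext hn
    rw [this, hget]
  have key : ∀ c : ℕ,
      play P1 (rot E hE) π2 vin (Nat.nth p (c * (sl E u).length + t) + 1) = u' := by
    intro c
    have hpi : play P1 (rot E hE) π2 vin (Nat.nth p (c * (sl E u).length + t)) = u :=
      Nat.nth_mem_of_infinite hinf _
    have hcnt : Nat.count p (Nat.nth p (c * (sl E u).length + t))
        = c * (sl E u).length + t := Nat.count_nth_of_infinite hinf _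
    rw [play_succ, hpi, if_pos hp]
    simp only [rot]
    apply hget'
    rw [cnt_range, hcnt, Nat.mul_comm, Nat.mul_add_mod]
    exact Nat.mod_eq_of_lt ht
  apply Set.infinite_of_forall_exists_gt
  intro a
  refine ⟨Nat.nth p (a * (sl E u).length + t) + 1, key a, ?_⟩
  have h1 : a * (sl E u).length + t ≤ Nat.nth p (a * (sl E u).length + t) :=
    (Nat.nth_strictMono hinf).le_apply
  have h2 : a ≤ a * (sl E u).length := Nat.le_mul_of_pos_right a hlen
  omega

/-- the infinitely visited set of a rotation-strategy play is an end component
containing `vin` -/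
lemma visInf_endComponent (E : V → V → Prop) (hE : ∀ v, ∃ u, E v u)
    (P1 : V → Bool) (vin : V)
    (hcr : ∀ v, Relation.ReflTransGen E vin v →
      ∃ π1, IsStrat E (fun u => P1 u = true) π1 ∧
        ∀ π2, IsStrat E (fun u => P1 u = false) π2 →
          ∃ i : ℕ, play P1 π1 π2 v i = vin)
    (π2 : List V → V → V) (hπ2 : IsStrat E (fun u => P1 u = false) π2) :
    IsEndComponent E P1 (VisInf (play P1 (rot E hE) π2 vin)) ∧
      vin ∈ VisInf (play P1 (rot E hE) π2 vin) := by
  classical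
  set ρ := play P1 (rot E hE) π2 vin with hρ
  have hπ1 := rot_isStrat E hE (fun u => P1 u = true)
  have hedge : ∀ i, E (ρ i) (ρ (i + 1)) := fun i => play_edge hπ1 hπ2 vin i
  have hne := infSet_nonempty ρ
  obtain ⟨N, hN⟩ := eventually_infSet ρ
  have hclosed : ∀ u ∈ VisInf ρ, P1 u = true → ∀ u', E u u' → u' ∈ VisInf ρ :=
    fun u hu hp u' he => visInf_p1_closed E hE P1 π2 vin hu hp he
  have hconn : ∀ u ∈ VisInf ρ, ∀ u' ∈ VisInf ρ,
      Relation.TransGen (fun a b => a ∈ VisInf ρ ∧ b ∈ VisInf ρ ∧ E a b) u u' := by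
    have chain : ∀ i j, N ≤ i → i < j →
        Relation.TransGen (fun a b => a ∈ VisInf ρ ∧ b ∈ VisInf ρ ∧ E a b)
          (ρ i) (ρ j) := by
      intro i j hNi
      induction j with
      | zero => omega
      | succ j ih =>
        intro hij
        rcases Nat.lt_succ_iff_lt_or_eq.mp hij with h | h
        · exact (ih h).tail ⟨hN j (by omega), hN (j + 1) (by omega), hedge j⟩
        · subst h
          exact Relation.TransGen.single
            ⟨hN i hNi, hN (i + 1) (by omega), hedge i⟩
    intro u hu u' hu'
    obtain ⟨i, hi, hiu⟩ := infSet_exists_ge hu N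
    obtain ⟨j, hj, hju⟩ := infSet_exists_ge hu' (i + 1)
    have := chain i j hi (by omega)
    rwa [hiu, hju] at this
  have hvin : vin ∈ VisInf ρ := by
    have hreach : ∀ i, Relation.ReflTransGen E vin (ρ i) :=
      fun i => play_reach hπ1 hπ2 vin i
    have hattr := reach_attr E hE P1 vin hcr
    set Nset : Set ℕ := {n | ∃ u ∈ VisInf ρ, u ∈ attr E P1 vin n} with hNset
    have hNne : Nset.Nonempty := by
      obtain ⟨u, hu⟩ := hne
      obtain ⟨i, _, hiu⟩ := infSet_exists_ge hu 0
      obtain ⟨k, hk⟩ := hattr u (by rw [← hiu]; exact hreach i)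
      exact ⟨k, u, hu, hk⟩
    obtain ⟨u, hu, huk⟩ := Nat.sInf_mem hNne
    rcases hm : sInf Nset with _ | k
    · rw [hm] at huk
      have : u = vin := huk
      rwa [← this]
    · rw [hm] at huk
      exfalso
      have hmin : ∀ u'' ∈ VisInf ρ, u'' ∉ attr E P1 vin k := by
        intro u'' hu'' hk'
        have hmem : k ∈ Nset := ⟨u'', hu'', hk'⟩
        have := Nat.sInf_le hmem
        omega
      simp only [attr] at huk
      rcases huk with h | h
      · exact hmin u hu h
      rcases h with ⟨hp, u', he, hu'⟩ | ⟨hp, hall⟩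
      · exact hmin u' (hclosed u hu hp u' he) hu'
      · obtain ⟨u', hu', he⟩ := infSet_succ hedge hu
        exact hmin u' hu' (hall u' he)
  exact ⟨⟨hne, hconn, hclosed⟩, hvin⟩

end Aux4

/-- Let `G = ((V,E),(V_1,V_2), v_in, AP, L)` be a labeled game graph that is
controllably recurrent: from every vertex `v` reachable from `v_in` in the underlying
graph, player 1 has a strategy ensuring, against every player-2 strategy, that the
play from `v` visits `v_in`.  Then there exists an end component `U` of `G` with
`v_in ∈ U` and a player-1 strategy `π_1` such that for every player-2 strategy `π_2`,
`|L(ω(v_in,π_1,π_2))| ≥ |⋃_{u∈U} L(u)|`. -/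
theorem controllably_recurrent_game_witness_end_component
    {V AP : Type*} [Fintype V] [Fintype AP]
    (E : V → V → Prop) (hE : ∀ v, ∃ u, E v u)
    (P1 : V → Bool) (vin : V) (L : V → Set AP)
    (hcr : ∀ v, Relation.ReflTransGen E vin v →
      ∃ π1, IsStrat E (fun u => P1 u = true) π1 ∧
        ∀ π2, IsStrat E (fun u => P1 u = false) π2 →
          ∃ i : ℕ, play P1 π1 π2 v i = vin) :
    ∃ U : Set V, IsEndComponent E P1 U ∧ vin ∈ U ∧
      ∃ π1, IsStrat E (fun u => P1 u = true) π1 ∧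
        ∀ π2, IsStrat E (fun u => P1 u = false) π2 →
          (⋃ u ∈ U, L u).ncard ≤ (⋃ i : ℕ, L (play P1 π1 π2 vin i)).ncard := by
  classical
  have key := fun π2 hπ2 => visInf_endComponent E hE P1 vin hcr π2 hπ2
  set Nset : Set ℕ := {n | ∃ U : Set V, (IsEndComponent E P1 U ∧ vin ∈ U) ∧
    (⋃ u ∈ U, L u).ncard = n} with hNs
  have hne : Nset.Nonempty := by
    have hπ2₀ : IsStrat E (fun u => P1 u = false) (fun _ v => (hE v).choose) :=
      fun w v _ => (hE v).choose_spec
    obtain ⟨h1, h2⟩ := key _ hπ2₀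
    exact ⟨_, _, ⟨h1, h2⟩, rfl⟩
  obtain ⟨U, ⟨hEC, hvinU⟩, hcard⟩ := Nat.sInf_mem hne
  refine ⟨U, hEC, hvinU, rot E hE, rot_isStrat E hE _, ?_⟩
  intro π2 hπ2
  obtain ⟨h1, h2⟩ := key π2 hπ2
  set ρ := play P1 (rot E hE) π2 vin with hρ
  have step1 : (⋃ u ∈ U, L u).ncard ≤ (⋃ u ∈ VisInf ρ, L u).ncard := by
    rw [hcard]
    exact Nat.sInf_le ⟨VisInf ρ, ⟨h1, h2⟩, rfl⟩
  have step2 : (⋃ u ∈ VisInf ρ, L u) ⊆ ⋃ i : ℕ, L (ρ i) := by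
    intro a ha
    simp only [Set.mem_iUnion] at ha ⊢
    obtain ⟨u, hu, hau⟩ := ha
    obtain ⟨i, _, hiu⟩ := infSet_exists_ge hu 0
    exact ⟨i, by rwa [hiu]⟩
  exact step1.trans (Set.ncard_le_ncard step2 (Set.toFinite _))
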